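/- Let H be an ASC-hypergraph and M ⊆ H. Then: (every M-antichain misses H and |M| = |⋃H|) if and only if M is a construction of H. -/

import Mathlib

namespace HG

variable {α : Type*} [DecidableEq α]

/-- The carrier of a hypergraph: the union of its members. -/
def carrier (H : Finset (Finset α)) : Finset α := H.sup id

/-- A hypergraph (on its carrier) is a finite family of sets not containing `∅`. -/
def IsHypergraph (H : Finset (Finset α)) : Prop := ∅ ∉ H

/-- The restriction `H_Y = {X ∈ H ∣ X ⊆ Y}`. -/
def restrict (H : Finset (Finset α)) (Y : Finset α) : Finset (Finset α) :=
  H.filter (· ⊆ Y)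

/-- `x` and `y` are joined by a path of `H`: a nonempty sequence of distinct members
of `H`, consecutive members intersecting, the first containing `x`, the last `y`. -/
def Joined (H : Finset (Finset α)) (x y : α) : Prop :=
  ∃ (X : Finset α) (l : List (Finset α)),
    (X :: l).Nodup ∧ (∀ Z ∈ X :: l, Z ∈ H) ∧
    (X :: l).Chain' (fun A B => (A ∩ B).Nonempty) ∧
    x ∈ X ∧ y ∈ (X :: l).getLast (List.cons_ne_nil X l)

/-- Path-connectedness of a hypergraph: any two carrier elements are joined. -/
def Conn (H : Finset (Finset α)) : Prop :=
  ∀ x ∈ carrier H, ∀ y ∈ carrier H, Joined H x y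

/-- `P` is a hypergraph partition of `H`: a partition of `H` whose family of
carriers is a partition of the carrier of `H`. -/
def IsHGPartition (H : Finset (Finset α)) (P : Finset (Finset (Finset α))) : Prop :=
  (∀ Q ∈ P, Q ≠ ∅) ∧
  (∀ Q ∈ P, ∀ Q' ∈ P, Q ≠ Q' → Disjoint Q Q') ∧
  P.sup id = H ∧
  (∀ Q ∈ P, ∀ Q' ∈ P, Q ≠ Q' → Disjoint (carrier Q) (carrier Q'))

/-- A hypergraph is atomic when it contains all singletons of carrier elements. -/
def Atomic (H : Finset (Finset α)) : Prop := ∀ x ∈ carrier H, {x} ∈ H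

/-- A hypergraph is saturated when intersecting members have their union in it. -/
def Saturated (H : Finset (Finset α)) : Prop :=
  ∀ X ∈ H, ∀ Y ∈ H, (X ∩ Y).Nonempty → X ∪ Y ∈ H

/-- `Y` is dispensable in `H` when `(H_Y) \ {Y}` is a connected hypergraph on `Y`. -/
def Dispensable (H : Finset (Finset α)) (Y : Finset α) : Prop :=
  IsHypergraph ((restrict H Y).erase Y) ∧
  carrier ((restrict H Y).erase Y) = Y ∧
  Conn ((restrict H Y).erase Y)

/-- `J` enhances `H` when `J = H ∪ {Y}` for some `Y ∉ H` dispensable in `H`. -/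
def Enhances (J H : Finset (Finset α)) : Prop :=
  ∃ Y, Dispensable H Y ∧ Y ∉ H ∧ J = insert Y H

/-- Cognation: the equivalence closure of the enhancement relation. -/
def Cognate (H J : Finset (Finset α)) : Prop :=
  Relation.EqvGen Enhances H J

/-- The finest hypergraph partition: one all of whose parts are connected. -/
def FinestHGPartition (H : Finset (Finset α)) (P : Finset (Finset (Finset α))) : Prop :=
  IsHGPartition H P ∧ ∀ Q ∈ P, Conn Q

/-- Constructions of a hypergraph, defined recursively. -/
inductive IsConstruction : Finset (Finset α) → Finset (Finset α) → Prop
  | empty : IsConstruction ∅ ∅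
  | conn {H K : Finset (Finset α)} {x : α} :
      (carrier H).Nonempty → Conn H → x ∈ carrier H →
      IsConstruction (restrict H ((carrier H).erase x)) K →
      IsConstruction H (insert (carrier H) K)
  | parts {H : Finset (Finset α)} {P : Finset (Finset (Finset α))}
      {K : Finset (Finset α) → Finset (Finset α)} :
      2 ≤ (carrier H).card → ¬ Conn H → 2 ≤ P.card → FinestHGPartition H P →
      (∀ Q ∈ P, IsConstruction Q (K Q)) →
      IsConstruction H (P.sup K)

/-- An `M`-antichain: at least two members of `M`, pairwise incomparable. -/
def IsAntichainIn (M S : Finset (Finset α)) : Prop :=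
  S ⊆ M ∧ 2 ≤ S.card ∧ ∀ X ∈ S, ∀ Y ∈ S, X ≠ Y → ¬ X ⊆ Y ∧ ¬ Y ⊆ X

/-- `S` misses `H` when the union of `S` is not a member of `H`. -/
def Misses (H S : Finset (Finset α)) : Prop := S.sup id ∉ H

/-- `x` is `X`-superficial relative to `M`. -/
def Superficial (M : Finset (Finset α)) (X : Finset α) (x : α) : Prop :=
  x ∈ X ∧ ∀ Y ∈ M, Y ⊂ X → x ∉ Y

/-- ASC-hypergraph: atomic, saturated and connected hypergraph. -/
def ASC (H : Finset (Finset α)) : Prop :=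
  IsHypergraph H ∧ Atomic H ∧ Saturated H ∧ Conn H

end HG
namespace HG

variable {α : Type*} [DecidableEq α]

/-- `M` is nested with respect to `H`: every `M`-antichain misses `H`. -/
def Nested (H M : Finset (Finset α)) : Prop := ∀ S, IsAntichainIn M S → Misses H S

lemma mem_carrier {H : Finset (Finset α)} {x : α} :
    x ∈ carrier H ↔ ∃ X ∈ H, x ∈ X := by
  simp [carrier, Finset.mem_sup]

lemma subset_carrier {H : Finset (Finset α)} {X : Finset α} (hX : X ∈ H) :
    X ⊆ carrier H := fun x hx => mem_carrier.2 ⟨X, hX, hx⟩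

lemma mem_restrict {H : Finset (Finset α)} {Y X : Finset α} :
    X ∈ restrict H Y ↔ X ∈ H ∧ X ⊆ Y := by simp [restrict]

lemma restrict_subset (H : Finset (Finset α)) (Y : Finset α) :
    restrict H Y ⊆ H := Finset.filter_subset _ _

lemma nonempty_of_mem {H : Finset (Finset α)} (hE : ∅ ∉ H) {X : Finset α}
    (hX : X ∈ H) : X.Nonempty := by
  rcases X.eq_empty_or_nonempty with rfl | h
  · exact absurd hX hE
  · exact h

lemma eq_empty_of_carrier {H : Finset (Finset α)} (hE : ∅ ∉ H)
    (h : carrier H = ∅) : H = ∅ := by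
  refine Finset.eq_empty_of_forall_notMem fun X hX => ?_
  obtain ⟨x, hx⟩ := nonempty_of_mem hE hX
  have := subset_carrier hX hx
  simp [h] at this

lemma exists_maximal_superset {F : Finset (Finset α)} {Z : Finset α} (hZ : Z ∈ F) :
    ∃ W ∈ F, Z ⊆ W ∧ ∀ Z' ∈ F, ¬ W ⊂ Z' := by
  classical
  obtain ⟨W, hW, hmax⟩ := (F.filter (Z ⊆ ·)).exists_maximal
    ⟨Z, Finset.mem_filter.2 ⟨hZ, le_refl Z⟩⟩
  rw [Finset.mem_filter] at hW
  exact ⟨W, hW.1, hW.2, fun Z' hZ' hlt =>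
    hlt.2 (hmax (Finset.mem_filter.2 ⟨hZ', hW.2.trans hlt.subset⟩) hlt.subset)⟩

lemma pair_antichain {M : Finset (Finset α)} {X Y : Finset α}
    (hX : X ∈ M) (hY : Y ∈ M) (hne : X ≠ Y) (h1 : ¬ X ⊆ Y) (h2 : ¬ Y ⊆ X) :
    IsAntichainIn M {X, Y} := by
  refine ⟨?_, ?_, ?_⟩
  · intro A hA
    rcases Finset.mem_insert.1 hA with rfl | hA
    · exact hX
    · rw [Finset.mem_singleton.1 hA]; exact hY
  · rw [Finset.card_insert_of_notMem (by simpa using hne), Finset.card_singleton]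
  · intro A hA B hB hAB
    have hA' : A = X ∨ A = Y := by simpa using hA
    have hB' : B = X ∨ B = Y := by simpa using hB
    rcases hA' with h | h <;> rcases hB' with h' | h'
    · exact absurd (h.trans h'.symm) hAB
    · rw [h, h']; exact ⟨h1, h2⟩
    · rw [h, h']; exact ⟨h2, h1⟩
    · exact absurd (h.trans h'.symm) hAB

lemma laminar {H M : Finset (Finset α)} (hSat : Saturated H) (hM : M ⊆ H)
    (hN : Nested H M) {X Y : Finset α} (hX : X ∈ M) (hY : Y ∈ M)
    (hint : (X ∩ Y).Nonempty) : X ⊆ Y ∨ Y ⊆ X := by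
  by_contra h
  push_neg at h
  have hne : X ≠ Y := fun e => h.1 (e ▸ subset_rfl)
  have hmiss := hN {X, Y} (pair_antichain hX hY hne h.1 h.2)
  rw [Misses] at hmiss
  apply hmiss
  have : ({X, Y} : Finset (Finset α)).sup id = X ∪ Y := by
    simp [Finset.sup_insert, Finset.sup_singleton]
  rw [this]
  exact hSat X (hM hX) Y (hM hY) hint

lemma exists_superficial {H M : Finset (Finset α)} (hE : ∅ ∉ H) (hM : M ⊆ H)
    (hN : Nested H M) {X : Finset α} (hX : X ∈ M) :
    ∃ x, Superficial M X x := by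
  classical
  by_contra h
  push_neg at h
  have h' : ∀ x ∈ X, ∃ Y ∈ M, Y ⊂ X ∧ x ∈ Y := by
    intro x hx
    have hx' := h x
    rw [Superficial] at hx'
    push_neg at hx'
    obtain ⟨Y, hY, hYX, hxY⟩ := hx' hx
    exact ⟨Y, hY, hYX, hxY⟩
  set T := M.filter (· ⊂ X) with hTdef
  set S := T.filter (fun Y => ∀ Z ∈ T, ¬ Y ⊂ Z) with hSdef
  have hST : S ⊆ T := Finset.filter_subset _ _
  have hTM : T ⊆ M := Finset.filter_subset _ _
  have hcov : ∀ x ∈ X, ∃ W ∈ S, x ∈ W := by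
    intro x hx
    obtain ⟨Y, hY, hYX, hxY⟩ := h' x hx
    have hYT : Y ∈ T := Finset.mem_filter.2 ⟨hY, hYX⟩
    obtain ⟨W, hW, hYW, hmax⟩ := exists_maximal_superset hYT
    exact ⟨W, Finset.mem_filter.2 ⟨hW, hmax⟩, hYW hxY⟩
  have hsub : ∀ Y ∈ S, Y ⊆ X := fun Y hY => ((Finset.mem_filter.1 (hST hY)).2).subset
  have hsupS : S.sup id = X := by
    apply le_antisymm
    · exact Finset.sup_le fun Y hY => hsub Y hY
    · intro x hx
      obtain ⟨W, hW, hxW⟩ := hcov x hx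
      exact Finset.mem_sup.2 ⟨W, hW, hxW⟩
  obtain ⟨x0, hx0⟩ := nonempty_of_mem hE (hM hX)
  obtain ⟨W0, hW0, hxW0⟩ := hcov x0 hx0
  have hW0X : W0 ⊂ X := (Finset.mem_filter.1 (hST hW0)).2
  obtain ⟨x1, hx1X, hx1W⟩ := Finset.exists_of_ssubset hW0X
  obtain ⟨W1, hW1, hxW1⟩ := hcov x1 hx1X
  have hWne : W0 ≠ W1 := fun e => hx1W (e ▸ hxW1)
  have hcard : 2 ≤ S.card := Finset.one_lt_card.2 ⟨W0, hW0, W1, hW1, hWne⟩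
  have hanti : IsAntichainIn M S := by
    refine ⟨hST.trans hTM, hcard, ?_⟩
    intro A hA B hB hAB
    constructor
    · intro hsub'
      exact (Finset.mem_filter.1 hA).2 B (hST hB) (lt_of_le_of_ne hsub' hAB)
    · intro hsub'
      exact (Finset.mem_filter.1 hB).2 A (hST hA) (lt_of_le_of_ne hsub' hAB.symm)
  have hmiss := hN S hanti
  rw [Misses, hsupS] at hmiss
  exact hmiss (hM hX)

lemma nested_card_le {H M : Finset (Finset α)} (hSat : Saturated H) (hE : ∅ ∉ H)
    (hM : M ⊆ H) (hN : Nested H M) : M.card ≤ (carrier H).card := by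
  classical
  rcases M.eq_empty_or_nonempty with rfl | ⟨X0, hX0⟩
  · simp
  obtain ⟨x0, _⟩ := nonempty_of_mem hE (hM hX0)
  haveI : Nonempty α := ⟨x0⟩
  have hsup : ∀ X ∈ M, ∃ x, Superficial M X x :=
    fun X hX => exists_superficial hE hM hN hX
  choose! f hf using hsup
  apply Finset.card_le_card_of_injOn f
    (fun X hX => subset_carrier (hM hX) (hf X hX).1)
  intro X hX Y hY he
  rw [Finset.mem_coe] at hX hY
  by_contra hne
  have hfXY : f X ∈ Y := by rw [he]; exact (hf Y hY).1
  have hint : (X ∩ Y).Nonempty := ⟨f X, Finset.mem_inter.2 ⟨(hf X hX).1, hfXY⟩⟩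
  rcases laminar hSat hM hN hX hY hint with hs | hs
  · exact (hf Y hY).2 X hX (lt_of_le_of_ne hs hne) (by rw [← he]; exact (hf X hX).1)
  · exact (hf X hX).2 Y hY (lt_of_le_of_ne hs (Ne.symm hne)) hfXY


lemma chain_union_mem {H : Finset (Finset α)} (hSat : Saturated H) :
    ∀ l : List (Finset α), l ≠ [] → (∀ Z ∈ l, Z ∈ H) →
      l.Chain' (fun A B => (A ∩ B).Nonempty) → ∃ U ∈ H, ∀ Z ∈ l, Z ⊆ U := by
  intro l
  induction l with
  | nil => intro h; exact absurd rfl h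
  | cons X t ih =>
    intro _ hmem hch
    rcases t with _ | ⟨Y, t'⟩
    · exact ⟨X, hmem X (List.mem_cons_self), by
        intro Z hZ
        rcases List.mem_singleton.1 hZ with rfl
        exact subset_rfl⟩
    · have hch' := (List.isChain_cons_cons.1 hch)
      obtain ⟨U, hU, hcov⟩ := ih (by simp) (fun Z hZ => hmem Z (List.mem_cons_of_mem _ hZ)) hch'.2
      have hXY : (X ∩ Y).Nonempty := hch'.1
      have hXU : (X ∩ U).Nonempty := by
        obtain ⟨a, ha⟩ := hXY
        rw [Finset.mem_inter] at ha
        exact ⟨a, Finset.mem_inter.2 ⟨ha.1, hcov Y (List.mem_cons_self) ha.2⟩⟩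
      refine ⟨X ∪ U, hSat X (hmem X (List.mem_cons_self)) U hU hXU, ?_⟩
      intro Z hZ
      rcases List.mem_cons.1 hZ with rfl | hZ
      · exact Finset.subset_union_left
      · exact (hcov Z hZ).trans Finset.subset_union_right

lemma carrier_mem_of_conn {H : Finset (Finset α)} (hE : ∅ ∉ H) (hSat : Saturated H)
    (hConn : Conn H) (hne : (carrier H).Nonempty) : carrier H ∈ H := by
  classical
  have hHne : H.Nonempty := by
    obtain ⟨x, hx⟩ := hne
    obtain ⟨X, hX, _⟩ := mem_carrier.1 hx
    exact ⟨X, hX⟩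
  obtain ⟨X, hX, -, hmax⟩ := exists_maximal_superset hHne.choose_spec
  have hcar : carrier H ⊆ X := by
    intro z hz
    by_contra hzX
    obtain ⟨x, hx⟩ := nonempty_of_mem hE hX
    obtain ⟨X0, l, hnd, hmem, hch, hxX0, hzlast⟩ :=
      hConn x (subset_carrier hX hx) z hz
    obtain ⟨U, hU, hcov⟩ := chain_union_mem hSat (X0 :: l) (by simp) hmem hch
    have hXU : (X ∩ U).Nonempty :=
      ⟨x, Finset.mem_inter.2 ⟨hx, hcov X0 (List.mem_cons_self) hxX0⟩⟩
    have hXuU : X ∪ U ∈ H := hSat X hX U hU hXU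
    have hzU : z ∈ U := hcov _ (List.getLast_mem _) hzlast
    exact hmax (X ∪ U) hXuU ⟨Finset.subset_union_left,
      fun hs => hzX (hs (Finset.mem_union_right _ hzU))⟩
  have : X = carrier H := le_antisymm (subset_carrier hX) hcar
  rwa [← this]

lemma carrier_restrict {H : Finset (Finset α)} (hAt : Atomic H) {W : Finset α}
    (hW : W ⊆ carrier H) : carrier (restrict H W) = W := by
  apply le_antisymm
  · exact Finset.sup_le fun Z hZ => (mem_restrict.1 hZ).2
  · intro y hy
    exact subset_carrier (mem_restrict.2 ⟨hAt y (hW hy), Finset.singleton_subset_iff.2 hy⟩)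
      (Finset.mem_singleton_self y)

lemma conn_restrict {H : Finset (Finset α)} (hAt : Atomic H) {W : Finset α}
    (hWH : W ∈ H) : Conn (restrict H W) := by
  have hWc : W ⊆ carrier H := subset_carrier hWH
  have hcr : carrier (restrict H W) = W := carrier_restrict hAt hWc
  intro x hx y hy
  rw [hcr] at hx hy
  have hxS : ({x} : Finset α) ∈ restrict H W :=
    mem_restrict.2 ⟨hAt x (hWc hx), Finset.singleton_subset_iff.2 hx⟩
  by_cases hxy : x = y
  · exact ⟨{x}, [], by simp, by simpa using hxS, List.isChain_singleton _,
      Finset.mem_singleton_self x, by simp [hxy]⟩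
  · have hyS : ({y} : Finset α) ∈ restrict H W :=
      mem_restrict.2 ⟨hAt y (hWc hy), Finset.singleton_subset_iff.2 hy⟩
    have hWr : W ∈ restrict H W := mem_restrict.2 ⟨hWH, subset_rfl⟩
    refine ⟨{x}, [W, {y}], ?_, ?_, ?_, Finset.mem_singleton_self x, ?_⟩
    · -- Nodup
      have h1 : ({x} : Finset α) ≠ W := fun e => hxy (by
        have := hy; rw [← e] at this; exact (Finset.mem_singleton.1 this).symm)
      have h2 : W ≠ ({y} : Finset α) := fun e => hxy (by
        have := hx; rw [e] at this; exact Finset.mem_singleton.1 this)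
      have h3 : ({x} : Finset α) ≠ ({y} : Finset α) := fun e => hxy (by
        have := Finset.mem_singleton_self x
        rw [e] at this; exact Finset.mem_singleton.1 this)
      simp [h1, h2, h3]
    · intro Z hZ
      rcases List.mem_cons.1 hZ with rfl | hZ
      · exact hxS
      rcases List.mem_cons.1 hZ with rfl | hZ
      · exact hWr
      rcases List.mem_cons.1 hZ with rfl | hZ
      · exact hyS
      · simp at hZ
    · refine List.isChain_cons_cons.2 ⟨⟨x, ?_⟩, List.isChain_cons_cons.2 ⟨⟨y, ?_⟩, by simp⟩⟩
      · exact Finset.mem_inter.2 ⟨Finset.mem_singleton_self x, hx⟩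
      · exact Finset.mem_inter.2 ⟨hy, Finset.mem_singleton_self y⟩
    · simp

lemma conn_of_card_le_one {H : Finset (Finset α)} (hAt : Atomic H)
    (h1 : (carrier H).card ≤ 1) : Conn H := by
  intro x hx y hy
  have hxy : x = y := by
    have := Finset.card_le_one.1 h1
    exact this x hx y hy
  exact ⟨{x}, [], by simp, by simpa using hAt x hx, List.isChain_singleton _,
    Finset.mem_singleton_self x, by simp [hxy]⟩

lemma carrier_sup_eq (P : Finset (Finset (Finset α))) :
    carrier (P.sup id) = P.sup carrier := by
  ext x
  simp only [mem_carrier, Finset.mem_sup, id]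
  constructor
  · rintro ⟨X, ⟨Q, hQ, hXQ⟩, hx⟩
    exact ⟨Q, hQ, X, hXQ, hx⟩
  · rintro ⟨Q, hQ, X, hXQ, hx⟩
    exact ⟨X, ⟨Q, hQ, hXQ⟩, hx⟩

lemma part_subset {H : Finset (Finset α)} {P : Finset (Finset (Finset α))}
    (hP : IsHGPartition H P) {Q : Finset (Finset α)} (hQ : Q ∈ P) : Q ⊆ H := by
  rw [← hP.2.2.1]
  intro Z hZ
  exact Finset.mem_sup.2 ⟨Q, hQ, hZ⟩

lemma part_eq_restrict {H : Finset (Finset α)} {P : Finset (Finset (Finset α))}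
    (hE : ∅ ∉ H) (hP : IsHGPartition H P) {Q : Finset (Finset α)} (hQ : Q ∈ P) :
    Q = restrict H (carrier Q) := by
  apply le_antisymm
  · intro Z hZ
    exact mem_restrict.2 ⟨part_subset hP hQ hZ, subset_carrier hZ⟩
  · intro Z hZ
    rw [mem_restrict] at hZ
    have : Z ∈ P.sup id := by rw [hP.2.2.1]; exact hZ.1
    obtain ⟨Q', hQ', hZQ'⟩ := Finset.mem_sup.1 this
    by_cases h : Q' = Q
    · rwa [← h]
    · obtain ⟨z, hz⟩ := nonempty_of_mem hE hZ.1
      exact absurd (hZ.2 hz) (Finset.disjoint_left.1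
        (hP.2.2.2 Q' hQ' Q hQ h) (subset_carrier hZQ' hz))

lemma part_carrier_ssubset {H : Finset (Finset α)} {P : Finset (Finset (Finset α))}
    (hE : ∅ ∉ H) (hP : IsHGPartition H P) (h2 : 2 ≤ P.card)
    {Q : Finset (Finset α)} (hQ : Q ∈ P) : carrier Q ⊂ carrier H := by
  have hsub : carrier Q ⊆ carrier H := by
    intro z hz
    obtain ⟨X, hXQ, hzX⟩ := mem_carrier.1 hz
    exact subset_carrier (part_subset hP hQ hXQ) hzX
  rw [Finset.ssubset_iff_of_subset hsub]
  · obtain ⟨Q', hQ', hne⟩ := Finset.exists_mem_ne h2 Q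
    have hQ'ne : Q'.Nonempty := Finset.nonempty_iff_ne_empty.2 (hP.1 Q' hQ')
    obtain ⟨Z, hZ⟩ := hQ'ne
    obtain ⟨z, hz⟩ := nonempty_of_mem hE (part_subset hP hQ' hZ)
    have hz1 : z ∈ carrier Q' := subset_carrier hZ hz
    refine ⟨z, subset_carrier (part_subset hP hQ' hZ) hz, ?_⟩
    exact fun hz2 => Finset.disjoint_left.1 (hP.2.2.2 Q' hQ' Q hQ hne) hz1 hz2

lemma card_carrier_partition {H : Finset (Finset α)} {P : Finset (Finset (Finset α))}
    (hP : IsHGPartition H P) : (carrier H).card = ∑ Q ∈ P, (carrier Q).card := by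
  have h1 : carrier H = P.biUnion carrier := by
    rw [← hP.2.2.1, carrier_sup_eq, Finset.sup_eq_biUnion]
  rw [h1, Finset.card_biUnion hP.2.2.2]

lemma exists_finest {H : Finset (Finset α)} (hE : ∅ ∉ H) (hAt : Atomic H)
    (hSat : Saturated H) (hNC : ¬ Conn H) :
    ∃ P : Finset (Finset (Finset α)), FinestHGPartition H P ∧ 2 ≤ P.card := by
  classical
  set maxM := H.filter (fun W => ∀ Z ∈ H, ¬ W ⊂ Z) with hmaxM
  set P := maxM.image (fun W => restrict H W) with hPdef
  have hmem : ∀ W ∈ maxM, W ∈ H ∧ ∀ Z ∈ H, ¬ W ⊂ Z := fun W hW => Finset.mem_filter.1 hW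
  -- distinct maximal members are disjoint
  have hdisjW : ∀ W ∈ maxM, ∀ W' ∈ maxM, W ≠ W' → Disjoint W W' := by
    intro W hW W' hW' hne
    rw [Finset.disjoint_left]
    intro a haW haW'
    have hu : W ∪ W' ∈ H := hSat W (hmem W hW).1 W' (hmem W' hW').1
      ⟨a, Finset.mem_inter.2 ⟨haW, haW'⟩⟩
    have h1 : W = W ∪ W' := by
      by_contra h
      exact (hmem W hW).2 _ hu (lt_of_le_of_ne Finset.subset_union_left h)
    have h2 : W' = W ∪ W' := by
      by_contra h
      exact (hmem W' hW').2 _ hu (lt_of_le_of_ne Finset.subset_union_right h)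
    exact hne (h1.trans h2.symm)
  have hcarQ : ∀ W ∈ maxM, carrier (restrict H W) = W :=
    fun W hW => carrier_restrict hAt (subset_carrier (hmem W hW).1)
  have hsupP : P.sup id = H := by
    apply le_antisymm
    · apply Finset.sup_le
      intro Q hQ
      obtain ⟨W, _, rfl⟩ := Finset.mem_image.1 hQ
      exact restrict_subset H W
    · intro Z hZ
      obtain ⟨W, hWH, hZW, hmax⟩ := exists_maximal_superset hZ
      have hWm : W ∈ maxM := Finset.mem_filter.2 ⟨hWH, hmax⟩
      exact Finset.mem_sup.2 ⟨restrict H W, Finset.mem_image_of_mem _ hWm,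
        mem_restrict.2 ⟨hZ, hZW⟩⟩
  have hQW : ∀ Q ∈ P, ∃ W ∈ maxM, Q = restrict H W ∧ carrier Q = W := by
    intro Q hQ
    obtain ⟨W, hW, rfl⟩ := Finset.mem_image.1 hQ
    exact ⟨W, hW, rfl, hcarQ W hW⟩
  have hPart : IsHGPartition H P := by
    refine ⟨?_, ?_, hsupP, ?_⟩
    · intro Q hQ
      obtain ⟨W, hW, rfl, _⟩ := hQW Q hQ
      exact Finset.ne_empty_of_mem (mem_restrict.2 ⟨(hmem W hW).1, subset_rfl⟩)
    · intro Q hQ Q' hQ' hne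
      obtain ⟨W, hW, rfl, hcW⟩ := hQW Q hQ
      obtain ⟨W', hW', rfl, hcW'⟩ := hQW Q' hQ'
      have hWne : W ≠ W' := fun e => hne (by rw [e])
      rw [Finset.disjoint_left]
      intro Z hZ hZ'
      obtain ⟨z, hz⟩ := nonempty_of_mem hE (mem_restrict.1 hZ).1
      exact Finset.disjoint_left.1 (hdisjW W hW W' hW' hWne)
        ((mem_restrict.1 hZ).2 hz) ((mem_restrict.1 hZ').2 hz)
    · intro Q hQ Q' hQ' hne
      obtain ⟨W, hW, rfl, hcW⟩ := hQW Q hQ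
      obtain ⟨W', hW', rfl, hcW'⟩ := hQW Q' hQ'
      have hWne : W ≠ W' := fun e => hne (by rw [e])
      rw [hcW, hcW']
      exact hdisjW W hW W' hW' hWne
  have hConnP : ∀ Q ∈ P, Conn Q := by
    intro Q hQ
    obtain ⟨W, hW, rfl, _⟩ := hQW Q hQ
    exact conn_restrict hAt (hmem W hW).1
  refine ⟨P, ⟨hPart, hConnP⟩, ?_⟩
  -- at least two parts
  have hcarne : (carrier H).Nonempty := by
    rcases (carrier H).eq_empty_or_nonempty with h | h
    · exact absurd (conn_of_card_le_one hAt (by simp [h])) hNC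
    · exact h
  have hPne : P.Nonempty := by
    obtain ⟨x, hx⟩ := hcarne
    obtain ⟨X, hX, _⟩ := mem_carrier.1 hx
    obtain ⟨W, hWH, _, hmax⟩ := exists_maximal_superset hX
    exact ⟨restrict H W, Finset.mem_image_of_mem _ (Finset.mem_filter.2 ⟨hWH, hmax⟩)⟩
  rcases Nat.lt_or_ge P.card 2 with h | h
  · exfalso
    have h1 : P.card = 1 := le_antisymm (Nat.lt_succ_iff.1 h) (Finset.card_pos.2 hPne)
    obtain ⟨Q, hQ⟩ := Finset.card_eq_one.1 h1
    have hQP : Q ∈ P := by rw [hQ]; exact Finset.mem_singleton_self Q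
    obtain ⟨W, hW, hQr, _⟩ := hQW Q hQP
    have hHQ : H = Q := by rw [← hsupP, hQ, Finset.sup_singleton]; rfl
    exact hNC (by rw [hHQ, hQr]; exact conn_restrict hAt (hmem W hW).1)
  · exact h

lemma exists_superficial_fun {H M : Finset (Finset α)} [Nonempty α]
    (hSat : Saturated H) (hE : ∅ ∉ H) (hM : M ⊆ H) (hN : Nested H M) :
    ∃ f : Finset α → α, (∀ X ∈ M, Superficial M X (f X)) ∧ Set.InjOn f M := by
  classical
  have hsup : ∀ X ∈ M, ∃ x, Superficial M X x :=
    fun X hX => exists_superficial hE hM hN hX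
  choose! f hf using hsup
  refine ⟨f, hf, ?_⟩
  intro X hX Y hY he
  rw [Finset.mem_coe] at hX hY
  by_contra hne
  have hfXY : f X ∈ Y := by rw [he]; exact (hf Y hY).1
  have hint : (X ∩ Y).Nonempty := ⟨f X, Finset.mem_inter.2 ⟨(hf X hX).1, hfXY⟩⟩
  rcases laminar hSat hM hN hX hY hint with hs | hs
  · exact (hf Y hY).2 X hX (lt_of_le_of_ne hs hne) (by rw [← he]; exact (hf X hX).1)
  · exact (hf X hX).2 Y hY (lt_of_le_of_ne hs (Ne.symm hne)) hfXY

lemma carrier_mem_nested {H M : Finset (Finset α)} (hE : ∅ ∉ H) (hSat : Saturated H)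
    (hM : M ⊆ H) (hN : Nested H M) (hcard : M.card = (carrier H).card)
    (hVH : carrier H ∈ H) (hVne : (carrier H).Nonempty) : carrier H ∈ M := by
  classical
  obtain ⟨x0, _⟩ := hVne
  haveI : Nonempty α := ⟨x0⟩
  obtain ⟨f, hf, hinj⟩ := exists_superficial_fun hSat hE hM hN
  have himg : M.image f = carrier H := by
    apply Finset.eq_of_subset_of_card_le
    · intro v hv
      obtain ⟨X, hX, rfl⟩ := Finset.mem_image.1 hv
      exact subset_carrier (hM hX) (hf X hX).1
    · rw [Finset.card_image_of_injOn hinj, hcard]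
  have hcov : ∀ v ∈ carrier H, ∃ X ∈ M, v ∈ X := by
    intro v hv
    rw [← himg] at hv
    obtain ⟨X, hX, rfl⟩ := Finset.mem_image.1 hv
    exact ⟨X, hX, (hf X hX).1⟩
  set Mx := M.filter (fun Y => ∀ Z ∈ M, ¬ Y ⊂ Z) with hMx
  have hMxM : Mx ⊆ M := Finset.filter_subset _ _
  have hsupMx : Mx.sup id = carrier H := by
    apply le_antisymm
    · exact Finset.sup_le fun Y hY => subset_carrier (hM (hMxM hY))
    · intro v hv
      obtain ⟨X, hX, hvX⟩ := hcov v hv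
      obtain ⟨W, hW, hXW, hmax⟩ := exists_maximal_superset hX
      exact Finset.mem_sup.2 ⟨W, Finset.mem_filter.2 ⟨hW, hmax⟩, hXW hvX⟩
  have hMxne : Mx.Nonempty := by
    obtain ⟨X, hX, _⟩ := hcov x0 ‹x0 ∈ carrier H›
    obtain ⟨W, hW, _, hmax⟩ := exists_maximal_superset hX
    exact ⟨W, Finset.mem_filter.2 ⟨hW, hmax⟩⟩
  have hlt2 : Mx.card < 2 := by
    by_contra h
    push_neg at h
    have hanti : IsAntichainIn M Mx := by
      refine ⟨hMxM, h, ?_⟩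
      intro A hA B hB hAB
      constructor
      · intro hsub
        exact (Finset.mem_filter.1 hA).2 B (hMxM hB) (lt_of_le_of_ne hsub hAB)
      · intro hsub
        exact (Finset.mem_filter.1 hB).2 A (hMxM hA) (lt_of_le_of_ne hsub hAB.symm)
    have := hN Mx hanti
    rw [Misses, hsupMx] at this
    exact this hVH
  obtain ⟨X0, hX0⟩ := Finset.card_eq_one.1
    (le_antisymm (Nat.lt_succ_iff.1 hlt2) (Finset.card_pos.2 hMxne))
  have hX0c : X0 = carrier H := by
    rw [← hsupMx, hX0, Finset.sup_singleton]; rfl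
  have : X0 ∈ M := hMxM (by rw [hX0]; exact Finset.mem_singleton_self X0)
  rwa [hX0c] at this

lemma restrict_props {H : Finset (Finset α)} (hE : ∅ ∉ H) (hAt : Atomic H)
    (hSat : Saturated H) {W : Finset α} (hW : W ⊆ carrier H) :
    (∅ ∉ restrict H W) ∧ Atomic (restrict H W) ∧ Saturated (restrict H W) ∧
      carrier (restrict H W) = W := by
  have hcar : carrier (restrict H W) = W := carrier_restrict hAt hW
  refine ⟨fun h => hE (restrict_subset _ _ h), ?_, ?_, hcar⟩
  · intro y hy
    rw [hcar] at hy
    exact mem_restrict.2 ⟨hAt y (hW hy), Finset.singleton_subset_iff.2 hy⟩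
  · intro X hX Y hY hint
    rw [mem_restrict] at hX hY ⊢
    exact ⟨hSat X hX.1 Y hY.1 hint, Finset.union_subset hX.2 hY.2⟩

theorem master : ∀ (n : ℕ) (H : Finset (Finset α)), (carrier H).card ≤ n →
    IsHypergraph H → Atomic H → Saturated H →
    (∀ M, M ⊆ H → Nested H M → M.card = (carrier H).card → IsConstruction H M) ∧
    (∀ M, IsConstruction H M → M ⊆ H ∧ Nested H M ∧ M.card = (carrier H).card) := by
  intro n
  induction n with
  | zero =>
    intro H hn hE hAt hSat
    have hcar : carrier H = ∅ := Finset.card_eq_zero.1 (Nat.le_zero.1 hn)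
    have hH : H = ∅ := eq_empty_of_carrier hE hcar
    subst hH
    constructor
    · intro M hM _ _
      rw [Finset.subset_empty.1 hM]
      exact IsConstruction.empty
    · intro M hC
      cases hC with
      | empty =>
        exact ⟨subset_rfl, fun S _ => Finset.notMem_empty _, by simp [carrier]⟩
      | conn hne hconn hx hK =>
        rw [hcar] at hne
        exact absurd hne (by simp)
      | parts h2c hNC hP2 hFP hKs =>
        rw [hcar] at h2c
        simp at h2c
  | succ n ih =>
    intro H hn hE hAt hSat
    constructor
    · -- (a) nested + card ⇒ construction
      intro M hM hN hcard
      rcases (carrier H).eq_empty_or_nonempty with hcar | hcar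
      · have hH : H = ∅ := eq_empty_of_carrier hE hcar
        subst hH
        rw [Finset.subset_empty.1 hM]
        exact IsConstruction.empty
      by_cases hConn : Conn H
      · -- connected case
        have hVH : carrier H ∈ H := carrier_mem_of_conn hE hSat hConn hcar
        have hVM : carrier H ∈ M := carrier_mem_nested hE hSat hM hN hcard hVH hcar
        obtain ⟨x, hx, hxsup⟩ := exists_superficial hE hM hN hVM
        have hWsub : (carrier H).erase x ⊆ carrier H := Finset.erase_subset _ _
        obtain ⟨hE', hAt', hSat', hcar'⟩ := restrict_props hE hAt hSat hWsub
        have hcard' : (carrier (restrict H ((carrier H).erase x))).card ≤ n := by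
          rw [hcar', Finset.card_erase_of_mem hx]
          omega
        have hM'sub : M.erase (carrier H) ⊆ restrict H ((carrier H).erase x) := by
          intro Y hY
          have hYM : Y ∈ M := Finset.mem_of_mem_erase hY
          have hYne : Y ≠ carrier H := Finset.ne_of_mem_erase hY
          have hYss : Y ⊂ carrier H := lt_of_le_of_ne (subset_carrier (hM hYM)) hYne
          have hxY : x ∉ Y := hxsup Y hYM hYss
          exact mem_restrict.2 ⟨hM hYM, fun a ha =>
            Finset.mem_erase.2 ⟨fun e => hxY (e ▸ ha), hYss.subset ha⟩⟩
        have hN' : Nested (restrict H ((carrier H).erase x)) (M.erase (carrier H)) := by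
          intro S hS
          exact fun h => hN S ⟨hS.1.trans (Finset.erase_subset _ _), hS.2.1, hS.2.2⟩
            (restrict_subset _ _ h)
        have hcardM' : (M.erase (carrier H)).card =
            (carrier (restrict H ((carrier H).erase x))).card := by
          rw [hcar', Finset.card_erase_of_mem hx, Finset.card_erase_of_mem hVM, hcard]
        have hcon' := (ih _ hcard' hE' hAt' hSat').1 _ hM'sub hN' hcardM'
        have hfin := IsConstruction.conn hcar hConn hx hcon'
        rwa [Finset.insert_erase hVM] at hfin
      · -- disconnected case
        obtain ⟨P, hFP, hP2⟩ := exists_finest hE hAt hSat hConn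
        have hPart := hFP.1
        have hpart : ∀ Q ∈ P, Q = restrict H (carrier Q) :=
          fun Q hQ => part_eq_restrict hE hPart hQ
        have hQprops : ∀ Q ∈ P, (∅ ∉ Q) ∧ Atomic Q ∧ Saturated Q := by
          intro Q hQ
          have hsub : carrier Q ⊆ carrier H :=
            (part_carrier_ssubset hE hPart hP2 hQ).subset
          obtain ⟨a, b, c, -⟩ := restrict_props hE hAt hSat hsub
          rw [hpart Q hQ]
          exact ⟨a, b, c⟩
        have hQcard : ∀ Q ∈ P, (carrier Q).card ≤ n := by
          intro Q hQ
          have := Finset.card_lt_card (part_carrier_ssubset hE hPart hP2 hQ)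
          omega
        have hMsplit : ∀ Y ∈ M, ∃ Q ∈ P, Y ∈ Q := by
          intro Y hY
          have h : Y ∈ P.sup id := by rw [hPart.2.2.1]; exact hM hY
          exact Finset.mem_sup.1 h
        have hKQ : ∀ Q ∈ P, M ∩ Q ⊆ Q := fun Q _ => Finset.inter_subset_right
        have hMeq : M = P.sup (fun Q => M ∩ Q) := by
          apply le_antisymm
          · intro Y hY
            obtain ⟨Q, hQ, hYQ⟩ := hMsplit Y hY
            exact Finset.mem_sup.2 ⟨Q, hQ, Finset.mem_inter.2 ⟨hY, hYQ⟩⟩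
          · exact Finset.sup_le fun Q hQ => Finset.inter_subset_left
        have hKdisj : ∀ Q ∈ P, ∀ Q' ∈ P, Q ≠ Q' → Disjoint (M ∩ Q) (M ∩ Q') := by
          intro Q hQ Q' hQ' hne
          exact Finset.disjoint_of_subset_left Finset.inter_subset_right
            (Finset.disjoint_of_subset_right Finset.inter_subset_right
              (hPart.2.1 Q hQ Q' hQ' hne))
        have hNQ : ∀ Q ∈ P, Nested Q (M ∩ Q) := by
          intro Q hQ S hS
          exact fun h => hN S ⟨hS.1.trans Finset.inter_subset_left, hS.2.1, hS.2.2⟩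
            (part_subset hPart hQ h)
        have hsum1 : M.card = ∑ Q ∈ P, (M ∩ Q).card := by
          conv_lhs => rw [hMeq]
          rw [Finset.sup_eq_biUnion, Finset.card_biUnion hKdisj]
        have hle : ∀ Q ∈ P, (M ∩ Q).card ≤ (carrier Q).card := by
          intro Q hQ
          obtain ⟨a, -, c⟩ := hQprops Q hQ
          exact nested_card_le c a (hKQ Q hQ) (hNQ Q hQ)
        have hKcard : ∀ Q ∈ P, (M ∩ Q).card = (carrier Q).card := by
          by_contra h
          push_neg at h
          obtain ⟨Q0, hQ0, hne0⟩ := h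
          have hltsum : ∑ Q ∈ P, (M ∩ Q).card < ∑ Q ∈ P, (carrier Q).card :=
            Finset.sum_lt_sum hle ⟨Q0, hQ0, lt_of_le_of_ne (hle Q0 hQ0) hne0⟩
          rw [← hsum1, ← card_carrier_partition hPart, hcard] at hltsum
          exact lt_irrefl _ hltsum
        have hcons : ∀ Q ∈ P, IsConstruction Q (M ∩ Q) := by
          intro Q hQ
          obtain ⟨a, b, c⟩ := hQprops Q hQ
          exact (ih Q (hQcard Q hQ) a b c).1 _ (hKQ Q hQ) (hNQ Q hQ) (hKcard Q hQ)
        have h2c : 2 ≤ (carrier H).card := by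
          by_contra h
          push_neg at h
          exact hConn (conn_of_card_le_one hAt (by omega))
        rw [hMeq]
        exact IsConstruction.parts h2c hConn hP2 hFP hcons
    · -- (b) construction ⇒ nested + card
      intro M hC
      cases hC with
      | empty =>
        exact ⟨subset_rfl, fun S _ => Finset.notMem_empty _, by simp [carrier]⟩
      | @conn _ K x hne hconn hx hK =>
        have hWsub : (carrier H).erase x ⊆ carrier H := Finset.erase_subset _ _
        obtain ⟨hE', hAt', hSat', hcar'⟩ := restrict_props hE hAt hSat hWsub
        have hcard' : (carrier (restrict H ((carrier H).erase x))).card ≤ n := by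
          rw [hcar', Finset.card_erase_of_mem hx]
          omega
        obtain ⟨hKsub, hKN, hKcard⟩ := (ih _ hcard' hE' hAt' hSat').2 _ hK
        have hVH : carrier H ∈ H := carrier_mem_of_conn hE hSat hconn hne
        have hVnotK : carrier H ∉ K := by
          intro h
          exact (Finset.notMem_erase x _) ((mem_restrict.1 (hKsub h)).2 hx)
        refine ⟨?_, ?_, ?_⟩
        · intro Y hY
          rcases Finset.mem_insert.1 hY with rfl | hY
          · exact hVH
          · exact restrict_subset _ _ (hKsub hY)
        · intro S hS
          have hSK : S ⊆ K := by
            intro Y hY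
            have hYM := hS.1 hY
            rcases Finset.mem_insert.1 hYM with h | h
            · exfalso
              obtain ⟨Z, hZ, hZne⟩ := Finset.exists_mem_ne hS.2.1 Y
              have hZM := hS.1 hZ
              have hZV : Z ⊆ carrier H := by
                rcases Finset.mem_insert.1 hZM with h' | h'
                · exact absurd (h'.trans h.symm) hZne
                · exact ((mem_restrict.1 (hKsub h')).2).trans (Finset.erase_subset _ _)
              exact (hS.2.2 Z hZ Y hY hZne).1 (by rw [h]; exact hZV)
            · exact h
          intro hsup
          apply hKN S ⟨hSK, hS.2.1, hS.2.2⟩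
          exact mem_restrict.2 ⟨hsup, Finset.sup_le fun Y hY =>
            (mem_restrict.1 (hKsub (hSK hY))).2⟩
        · rw [Finset.card_insert_of_notMem hVnotK, hKcard, hcar',
            Finset.card_erase_of_mem hx]
          have hpos : 0 < (carrier H).card := Finset.card_pos.2 hne
          omega
      | @parts _ P K h2c hNC hP2 hFP hKs =>
        have hPart := hFP.1
        have hpart : ∀ Q ∈ P, Q = restrict H (carrier Q) :=
          fun Q hQ => part_eq_restrict hE hPart hQ
        have hQprops : ∀ Q ∈ P, (∅ ∉ Q) ∧ Atomic Q ∧ Saturated Q := by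
          intro Q hQ
          have hsub : carrier Q ⊆ carrier H :=
            (part_carrier_ssubset hE hPart hP2 hQ).subset
          obtain ⟨a, b, c, -⟩ := restrict_props hE hAt hSat hsub
          rw [hpart Q hQ]
          exact ⟨a, b, c⟩
        have hQcard : ∀ Q ∈ P, (carrier Q).card ≤ n := by
          intro Q hQ
          have := Finset.card_lt_card (part_carrier_ssubset hE hPart hP2 hQ)
          omega
        have hIH : ∀ Q ∈ P, K Q ⊆ Q ∧ Nested Q (K Q) ∧ (K Q).card = (carrier Q).card := by
          intro Q hQ
          obtain ⟨a, b, c⟩ := hQprops Q hQ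
          exact (ih Q (hQcard Q hQ) a b c).2 (K Q) (hKs Q hQ)
        have hKdisj : ∀ Q ∈ P, ∀ Q' ∈ P, Q ≠ Q' → Disjoint (K Q) (K Q') := by
          intro Q hQ Q' hQ' hne
          exact Finset.disjoint_of_subset_left (hIH Q hQ).1
            (Finset.disjoint_of_subset_right (hIH Q' hQ').1
              (hPart.2.1 Q hQ Q' hQ' hne))
        refine ⟨?_, ?_, ?_⟩
        · exact Finset.sup_le fun Q hQ => ((hIH Q hQ).1).trans (part_subset hPart hQ)
        · intro S hS hsup
          have hmem : S.sup id ∈ P.sup id := by rw [hPart.2.2.1]; exact hsup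
          obtain ⟨Q0, hQ0, hsupQ0⟩ := Finset.mem_sup.1 hmem
          have hSsub : ∀ Y ∈ S, Y ∈ K Q0 := by
            intro Y hY
            obtain ⟨Q, hQ, hYK⟩ := Finset.mem_sup.1 (hS.1 hY)
            have hYQ : Y ∈ Q := (hIH Q hQ).1 hYK
            by_cases he : Q = Q0
            · rw [← he]; exact hYK
            · exfalso
              obtain ⟨y, hy⟩ := nonempty_of_mem (hQprops Q hQ).1 hYQ
              have hy1 : y ∈ carrier Q := subset_carrier hYQ hy
              have hy2 : y ∈ carrier Q0 :=
                subset_carrier hsupQ0 (Finset.le_sup (f := id) hY hy)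
              exact Finset.disjoint_left.1 (hPart.2.2.2 Q hQ Q0 hQ0 he) hy1 hy2
          exact (hIH Q0 hQ0).2.1 S ⟨hSsub, hS.2.1, hS.2.2⟩ hsupQ0
        · rw [Finset.sup_eq_biUnion, Finset.card_biUnion hKdisj,
            card_carrier_partition hPart]
          exact Finset.sum_congr rfl fun Q hQ => (hIH Q hQ).2.2
end HG
open HG

theorem construction_characterization
    {α : Type*} [DecidableEq α]
    (H M : Finset (Finset α)) (hH : ASC H) (hM : M ⊆ H) :
    ((∀ S, IsAntichainIn M S → Misses H S) ∧ M.card = (carrier H).card) ↔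
      IsConstruction H M := by
  obtain ⟨hE, hAt, hSat, hConn⟩ := hH
  have hm := HG.master (carrier H).card H le_rfl hE hAt hSat
  constructor
  · rintro ⟨hN, hcard⟩
    exact hm.1 M hM hN hcard
  · intro hC
    obtain ⟨-, hN, hcard⟩ := hm.2 M hC
    exact ⟨hN, hcard⟩
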